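/- A doubly monic integer polynomial f(x) of degree n is a Cappell-Shaneson polynomial if and only if its signed reciprocal f*(x) is a Cappell-Shaneson polynomial. -/

import Mathlib

open Polynomial

noncomputable def compound {R : Type*} [CommRing R] {n : ℕ} (k : ℕ)
    (A : Matrix (Fin n) (Fin n) R) :
    Matrix {s : Finset (Fin n) // s.card = k} {s : Finset (Fin n) // s.card = k} R :=
  Matrix.of fun s t =>
    (Matrix.of fun i j : Fin k =>
      A (s.1.orderIsoOfFin s.2 i).1 (t.1.orderIsoOfFin t.2 j).1).det

/-- The companion matrix of a monic polynomial. -/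
noncomputable def companion {R : Type*} [CommRing R] (f : Polynomial R) :
    Matrix (Fin f.natDegree) (Fin f.natDegree) R :=
  Matrix.of fun i j =>
    if (i : ℕ) + 1 = f.natDegree then -f.coeff j
    else if (j : ℕ) = (i : ℕ) + 1 then 1 else 0

/-- The signed reciprocal polynomial `f*(t) = (-1)^n t^n f(t⁻¹)` of a (doubly monic)
polynomial of degree `n`. -/
noncomputable def signedReciprocal {R : Type*} [CommRing R] (f : Polynomial R) : Polynomial R :=
  (-1 : Polynomial R) ^ f.natDegree * f.reverse

/-- `f` is a Cappell-Shaneson polynomial: it is doubly monic (so its companion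
matrix lies in `SL(n,ℤ)`) and the companion matrix `A` satisfies
`det(I - ⋀^k A) = ±1` for all `1 ≤ k ≤ ⌊n/2⌋`. -/
def IsCSPoly (f : Polynomial ℤ) : Prop :=
  f.Monic ∧ f.coeff 0 = (-1) ^ f.natDegree ∧
    ∀ k, 1 ≤ k → k ≤ f.natDegree / 2 →
      (1 - compound k (companion f)).det = 1 ∨
      (1 - compound k (companion f)).det = -1

namespace CSAux

open Finset Matrix

variable {R : Type*} [CommRing R]

/-- enumeration of a `k`-subset in increasing order -/
def enum {n k : ℕ} (s : {s : Finset (Fin n) // s.card = k}) : Fin k → Fin n :=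
  fun i => (s.1.orderIsoOfFin s.2 i).1

lemma enum_injective {n k : ℕ} (s : {s : Finset (Fin n) // s.card = k}) :
    Function.Injective (enum s) := by
  intro i j h
  exact (s.1.orderIsoOfFin s.2).injective (Subtype.ext h)

lemma enum_mem {n k : ℕ} (s : {s : Finset (Fin n) // s.card = k}) (i : Fin k) :
    enum s i ∈ s.1 := (s.1.orderIsoOfFin s.2 i).2

theorem cauchyBinet {k n : ℕ} (A : Matrix (Fin k) (Fin n) R) (B : Matrix (Fin n) (Fin k) R) :
    (A * B).det = ∑ s : {s : Finset (Fin n) // s.card = k},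
      (A.submatrix id (enum s)).det * (B.submatrix (enum s) id).det := by
  classical
  have h1 : (A * B).det = ∑ r : Fin k → Fin n,
      (∏ i, A i (r i)) * (B.submatrix r id).det := by
    calc (A * B).det
        = Matrix.detRowAlternating (fun i => ∑ l : Fin n, A i l • B l) := by
          congr 1; ext i j; simp [Matrix.mul_apply, Finset.sum_apply]
      _ = ∑ r : Fin k → Fin n, Matrix.detRowAlternating (fun i => A i (r i) • B (r i)) :=
          (Matrix.detRowAlternating (R := R) (n := Fin k)).toMultilinearMap.map_sum
            (fun i l => A i l • B l)
      _ = ∑ r : Fin k → Fin n, (∏ i, A i (r i)) * (B.submatrix r id).det := by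
          refine Finset.sum_congr rfl fun r _ => ?_
          have := MultilinearMap.map_smul_univ
            (Matrix.detRowAlternating (R := R) (n := Fin k)).toMultilinearMap
            (fun i => A i (r i)) (fun i => B (r i))
          rw [smul_eq_mul] at this
          exact this
  rw [h1]
  have hz : ∀ r : Fin k → Fin n, ¬Function.Injective r →
      (∏ i, A i (r i)) * (B.submatrix r id).det = 0 := by
    intro r hr
    rw [Function.not_injective_iff] at hr
    obtain ⟨i, j, hij, hne⟩ := hr
    have : (B.submatrix r id).det = 0 :=
      Matrix.det_zero_of_row_eq hne (by ext l; simp [Matrix.submatrix_apply, hij])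
    rw [this, mul_zero]
  rw [← Finset.sum_filter_of_ne (p := fun r : Fin k → Fin n => Function.Injective r)
    (fun r _ hne => by by_contra hinj; exact hne (hz r hinj))]
  have himg : ∀ s : {s : Finset (Fin n) // s.card = k}, Finset.image (enum s) univ = s.1 := by
    intro s
    ext a
    simp only [Finset.mem_image, Finset.mem_univ, true_and]
    constructor
    · rintro ⟨i, rfl⟩; exact enum_mem s i
    · intro ha
      exact ⟨(s.1.orderIsoOfFin s.2).symm ⟨a, ha⟩, by simp [enum]⟩
  have h4 : ∑ r ∈ univ.filter (fun r : Fin k → Fin n => Function.Injective r),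
        (∏ i, A i (r i)) * (B.submatrix r id).det
      = ∑ p : {s : Finset (Fin n) // s.card = k} × Equiv.Perm (Fin k),
        (∏ i, A i ((enum p.1 ∘ p.2) i)) * (B.submatrix (enum p.1 ∘ p.2) id).det := by
    refine (Finset.sum_bij (fun p _ => enum p.1 ∘ p.2) ?_ ?_ ?_ (fun p _ => rfl)).symm
    · intro p _
      simp only [Finset.mem_filter, Finset.mem_univ, true_and]
      exact (enum_injective p.1).comp p.2.injective
    · rintro ⟨s₁, σ₁⟩ _ ⟨s₂, σ₂⟩ _ h
      have hs : s₁ = s₂ := by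
        apply Subtype.ext
        rw [← himg s₁, ← himg s₂]
        rw [show enum s₁ = enum s₂ ∘ σ₂ ∘ σ₁.symm by
          ext i; have := congrFun h (σ₁.symm i); exact congrArg Fin.val (by simpa using this)]
        ext a
        simp only [Finset.mem_image, Finset.mem_univ, true_and, Function.comp_apply]
        constructor
        · rintro ⟨i, rfl⟩; exact ⟨_, rfl⟩
        · rintro ⟨i, rfl⟩; exact ⟨σ₁ (σ₂.symm i), by simp⟩
      subst hs
      have hσ : σ₁ = σ₂ := by
        apply Equiv.ext
        intro i
        exact enum_injective s₁ (congrFun h i)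
      rw [hσ]
    · intro r hr
      have hrinj : Function.Injective r := by
        simpa only [Finset.mem_filter, Finset.mem_univ, true_and] using hr
      refine ⟨⟨⟨Finset.image r univ, ?_⟩, ?_⟩, Finset.mem_univ _, ?_⟩
      · rw [Finset.card_image_of_injective _ hrinj, Finset.card_univ, Fintype.card_fin]
      · refine Equiv.ofBijective
          (fun i => ((Finset.image r univ).orderIsoOfFin ?_).symm
            ⟨r i, by simp [Finset.mem_image]⟩)
          (Finite.injective_iff_bijective.mp ?_)
        · rw [Finset.card_image_of_injective _ hrinj, Finset.card_univ, Fintype.card_fin]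
        · intro a b hab
          have := (OrderIso.injective _) hab
          exact hrinj (by simpa using congrArg Subtype.val this)
      · ext i
        simp [enum, Equiv.ofBijective]
  rw [h4, Fintype.sum_prod_type]
  refine Finset.sum_congr rfl fun s _ => ?_
  -- inner sum over permutations
  have hsub : ∀ σ : Equiv.Perm (Fin k),
      B.submatrix (enum s ∘ σ) id = (B.submatrix (enum s) id).submatrix σ id := by
    intro σ; rw [Matrix.submatrix_submatrix]; rfl
  calc ∑ σ : Equiv.Perm (Fin k),
        (∏ i, A i ((enum s ∘ σ) i)) * (B.submatrix (enum s ∘ σ) id).det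
      = ∑ σ : Equiv.Perm (Fin k),
        ((Equiv.Perm.sign σ : ℤ) * ∏ i, A (σ i) (enum s i)) * (B.submatrix (enum s) id).det := by
        refine Fintype.sum_equiv (Equiv.inv (Equiv.Perm (Fin k))) _ _ fun σ => ?_
        simp only [Equiv.inv_apply]
        rw [hsub, Matrix.det_permute]
        have hprod : ∏ i, A i ((enum s ∘ σ) i) = ∏ i, A (σ⁻¹ i) (enum s i) := by
          rw [← Equiv.prod_comp σ (fun i => A (σ⁻¹ i) (enum s i))]
          simp
        rw [hprod, show Equiv.Perm.sign σ⁻¹ = Equiv.Perm.sign σ from Equiv.Perm.sign_inv σ]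
        push_cast
        ring
    _ = (A.submatrix id (enum s)).det * (B.submatrix (enum s) id).det := by
        rw [← Finset.sum_mul]
        congr 1
        rw [Matrix.det_apply']
        rfl

lemma compound_apply {n k : ℕ} (A : Matrix (Fin n) (Fin n) R)
    (s t : {s : Finset (Fin n) // s.card = k}) :
    compound k A s t = (A.submatrix (enum s) (enum t)).det := rfl

theorem compound_mul {n k : ℕ} (A B : Matrix (Fin n) (Fin n) R) :
    compound k (A * B) = compound k A * compound k B := by
  ext s t
  rw [Matrix.mul_apply, compound_apply]
  have : (A * B).submatrix (enum s) (enum t)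
      = (A.submatrix (enum s) (⇑(Equiv.refl (Fin n)))) *
        (B.submatrix (⇑(Equiv.refl (Fin n))) (enum t)) :=
    (Matrix.submatrix_mul_equiv A B (enum s) (Equiv.refl (Fin n)) (enum t)).symm
  rw [this, cauchyBinet]
  refine Finset.sum_congr rfl fun u _ => ?_
  rw [compound_apply, compound_apply]
  congr 1 <;> rw [Matrix.submatrix_submatrix] <;> rfl

theorem compound_one {n k : ℕ} :
    compound k (1 : Matrix (Fin n) (Fin n) R) = 1 := by
  ext s t
  rw [compound_apply]
  by_cases hst : s = t
  · subst hst
    rw [Matrix.one_apply_eq]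
    have : (1 : Matrix (Fin n) (Fin n) R).submatrix (enum s) (enum s)
        = (1 : Matrix (Fin k) (Fin k) R) := by
      ext i j
      simp only [Matrix.submatrix_apply, Matrix.one_apply]
      by_cases h : i = j
      · simp [h]
      · rw [if_neg h, if_neg (fun hc => h (enum_injective s hc))]
    rw [this, Matrix.det_one]
  · rw [Matrix.one_apply_ne hst]
    -- there is an element of s not in t
    obtain ⟨a, ha, hat⟩ : ∃ a ∈ s.1, a ∉ t.1 := by
      by_contra hc
      push_neg at hc
      exact hst (Subtype.ext (Finset.eq_of_subset_of_card_le hc (by rw [s.2, t.2])))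
    apply Matrix.det_eq_zero_of_row_eq_zero ((s.1.orderIsoOfFin s.2).symm ⟨a, ha⟩)
    intro j
    have he : enum s ((s.1.orderIsoOfFin s.2).symm ⟨a, ha⟩) = a := by simp [enum]
    simp only [Matrix.submatrix_apply, he, Matrix.one_apply]
    rw [if_neg]
    intro hc
    exact hat (hc ▸ enum_mem t j)

section conj

variable {m n k : ℕ} (e : Fin n ≃ Fin m)

/-- image of a k-subset under an equiv -/
def submapE (e : Fin n ≃ Fin m) :
    {s : Finset (Fin n) // s.card = k} ≃ {s : Finset (Fin m) // s.card = k} where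
  toFun s := ⟨s.1.map e.toEmbedding, by rw [Finset.card_map, s.2]⟩
  invFun t := ⟨t.1.map e.symm.toEmbedding, by rw [Finset.card_map, t.2]⟩
  left_inv s := by
    apply Subtype.ext
    simp [Finset.map_map]
  right_inv t := by
    apply Subtype.ext
    simp [Finset.map_map]

/-- the permutation relating the enumeration of `s` and of its image -/
def permE (e : Fin n ≃ Fin m) (s : {s : Finset (Fin n) // s.card = k}) : Equiv.Perm (Fin k) :=
  ((s.1.orderIsoOfFin s.2).toEquiv.trans
    ((e.subtypeEquiv (fun a => (Finset.mem_map' e.toEmbedding).symm)).trans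
      (((submapE e s).1.orderIsoOfFin (submapE e s).2).toEquiv.symm))).symm.symm

lemma enum_permE (s : {s : Finset (Fin n) // s.card = k}) (i : Fin k) :
    enum (submapE e s) (permE e s i) = e (enum s i) := by
  simp [permE, enum, submapE]
  exact congrArg Subtype.val (OrderIso.apply_symm_apply _ _)

lemma det_one_sub_compound_submatrix (A : Matrix (Fin m) (Fin m) R) :
    (1 - compound k (A.submatrix e e)).det = (1 - compound k A).det := by
  classical
  set E := submapE (k := k) e with hE
  set d : {s : Finset (Fin n) // s.card = k} → R :=
    fun s => ((Equiv.Perm.sign (permE e s) : ℤ) : R) with hd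
  have hd2 : ∀ s, d s * d s = 1 := by
    intro s
    rw [hd]
    rcases Int.units_eq_one_or (Equiv.Perm.sign (permE e s)) with h | h <;> simp [h]
  have hcomp : ∀ s t, compound k (A.submatrix e e) s t
      = d s * (compound k A (E s) (E t)) * d t := by
    intro s t
    rw [compound_apply, compound_apply]
    have h1 : (A.submatrix e e).submatrix (enum s) (enum t)
        = (A.submatrix (enum (E s)) (enum (E t))).submatrix (permE e s) (permE e t) := by
      ext i j
      simp only [Matrix.submatrix_apply]
      rw [enum_permE, enum_permE]
    rw [h1, show ((A.submatrix (enum (E s)) (enum (E t))).submatrix (permE e s) (permE e t))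
        = ((A.submatrix (enum (E s)) (enum (E t))).submatrix (permE e s) id).submatrix
          id (permE e t) by rw [Matrix.submatrix_submatrix]; rfl,
      Matrix.det_permute', Matrix.det_permute]
    push_cast
    ring
  have hmat : (1 : Matrix _ _ R) - compound k (A.submatrix e e)
      = (Matrix.diagonal d) * (((1 : Matrix _ _ R) - compound k A).submatrix E E)
        * (Matrix.diagonal d) := by
    ext s t
    rw [Matrix.mul_diagonal, Matrix.diagonal_mul, Matrix.sub_apply, hcomp s t,
      Matrix.submatrix_apply, Matrix.sub_apply]
    by_cases hst : s = t
    · subst hst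
      rw [Matrix.one_apply_eq, Matrix.one_apply_eq]
      linear_combination -hd2 s
    · rw [Matrix.one_apply_ne hst, Matrix.one_apply_ne (fun hc => hst (E.injective hc))]
      ring
  rw [hmat, Matrix.det_mul, Matrix.det_mul, Matrix.det_diagonal,
    Matrix.det_submatrix_equiv_self]
  have : (∏ s, d s) * ((1 - compound k A).det * ∏ s, d s)
      = (∏ s, d s * d s) * (1 - compound k A).det := by
    rw [Finset.prod_mul_distrib]
    ring
  rw [mul_assoc, this]
  simp [hd2]

end conj

section poly

lemma neg_one_sq_pow (n : ℕ) : (-1 : ℤ)^n * (-1)^n = 1 := by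
  rw [← pow_add]
  exact Even.neg_one_pow ⟨n, rfl⟩

lemma sr_coeff (f : ℤ[X]) (i : ℕ) :
    (signedReciprocal f).coeff i = (-1)^f.natDegree * f.coeff (revAt f.natDegree i) := by
  have h : ((-1 : ℤ[X]))^f.natDegree = C ((-1)^f.natDegree) := by
    rw [← C_1, ← C_neg, ← C_pow]
  rw [signedReciprocal, h, coeff_C_mul, coeff_reverse]

lemma sr_natDegree (f : ℤ[X]) (h0 : f.coeff 0 ≠ 0) :
    (signedReciprocal f).natDegree = f.natDegree := by
  apply le_antisymm
  · refine le_trans (natDegree_mul_le) ?_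
    have h : ((-1 : ℤ[X]))^f.natDegree = C ((-1)^f.natDegree) := by
      rw [← C_1, ← C_neg, ← C_pow]
    rw [h, natDegree_C, zero_add]
    exact f.reverse_natDegree_le
  · apply le_natDegree_of_ne_zero
    rw [sr_coeff, revAt_le le_rfl, Nat.sub_self]
    intro hc
    rcases mul_eq_zero.mp hc with h | h
    · exact pow_ne_zero _ (by norm_num) h
    · exact h0 h

lemma sr_monic (f : ℤ[X]) (hm : f.Monic) (h0 : f.coeff 0 = (-1)^f.natDegree) :
    (signedReciprocal f).Monic := by
  have h0ne : f.coeff 0 ≠ 0 := by rw [h0]; exact pow_ne_zero _ (by norm_num)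
  unfold Polynomial.Monic Polynomial.leadingCoeff
  rw [sr_natDegree f h0ne, sr_coeff, revAt_le le_rfl, Nat.sub_self, h0]
  exact neg_one_sq_pow _

lemma sr_coeff_zero (f : ℤ[X]) (hm : f.Monic) (h0 : f.coeff 0 = (-1)^f.natDegree) :
    (signedReciprocal f).coeff 0 = (-1)^(signedReciprocal f).natDegree := by
  have h0ne : f.coeff 0 ≠ 0 := by rw [h0]; exact pow_ne_zero _ (by norm_num)
  rw [sr_natDegree f h0ne, sr_coeff, revAt_zero, hm.coeff_natDegree, mul_one]

lemma sr_sr (f : ℤ[X]) (hm : f.Monic) (h0 : f.coeff 0 = (-1)^f.natDegree) :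
    signedReciprocal (signedReciprocal f) = f := by
  have h0ne : f.coeff 0 ≠ 0 := by rw [h0]; exact pow_ne_zero _ (by norm_num)
  ext i
  rw [sr_coeff, sr_natDegree f h0ne, sr_coeff, revAt_invol, ← mul_assoc,
    neg_one_sq_pow, one_mul]

end poly

section comp

/-- The reversing equivalence between index types. -/
noncomputable def flipE (f : ℤ[X]) (hd : (signedReciprocal f).natDegree = f.natDegree) :
    Fin f.natDegree ≃ Fin (signedReciprocal f).natDegree :=
  Fin.revPerm.trans (finCongr hd.symm)

lemma flipE_val (f : ℤ[X]) (hd : (signedReciprocal f).natDegree = f.natDegree)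
    (j : Fin f.natDegree) : ((flipE f hd j : Fin (signedReciprocal f).natDegree) : ℕ)
      = f.natDegree - (j + 1) := by
  simp [flipE, Fin.val_rev]

lemma companion_mul_inv (f : ℤ[X]) (hm : f.Monic) (h0 : f.coeff 0 = (-1)^f.natDegree)
    (hd : (signedReciprocal f).natDegree = f.natDegree) :
    companion f * ((companion (signedReciprocal f)).submatrix (flipE f hd) (flipE f hd)) = 1 := by
  set n := f.natDegree with hn
  ext i l
  have hin : (i : ℕ) < n := i.isLt
  have hln : (l : ℕ) < n := l.isLt
  have hnpos : 0 < n := Nat.zero_lt_of_lt hin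
  have hCval : ∀ j : Fin n, (companion (signedReciprocal f)).submatrix
      (flipE f hd) (flipE f hd) j l =
      (if n - ((j:ℕ) + 1) + 1 = n then -((-1:ℤ)^n * f.coeff ((l:ℕ) + 1))
       else if n - ((l:ℕ) + 1) = n - ((j:ℕ) + 1) + 1 then 1 else 0) := by
    intro j
    rw [Matrix.submatrix_apply]
    show (if ((flipE f hd j : Fin _) : ℕ) + 1 = (signedReciprocal f).natDegree
        then -(signedReciprocal f).coeff ((flipE f hd l : Fin _) : ℕ)
        else if ((flipE f hd l : Fin _) : ℕ) = ((flipE f hd j : Fin _) : ℕ) + 1 then 1 else 0) = _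
    rw [flipE_val, flipE_val, hd]
    congr 1
    rw [sr_coeff]
    have : revAt f.natDegree (n - ((l:ℕ)+1)) = (l:ℕ) + 1 := by
      rw [revAt_le (by omega)]
      omega
    rw [this]
  rw [Matrix.mul_apply]
  by_cases hi : (i : ℕ) + 1 = n
  · -- last row
    have hsum : ∀ j : Fin n, companion f i j *
        ((companion (signedReciprocal f)).submatrix (flipE f hd) (flipE f hd) j l)
        = (if j = (⟨0, hnpos⟩ : Fin n) then f.coeff ((l:ℕ)+1) else 0)
          + (if (j : ℕ) = (l : ℕ) + 1 then -f.coeff ((l:ℕ)+1) else 0) := by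
      intro j
      rw [hCval j]
      show (if (i : ℕ) + 1 = f.natDegree then -f.coeff (j:ℕ)
        else if (j:ℕ) = (i:ℕ)+1 then 1 else 0) * _ = _
      rw [if_pos hi]
      by_cases hj0 : j = (⟨0, hnpos⟩ : Fin n)
      · subst hj0
        rw [if_pos (by simp; omega), if_pos rfl, if_neg (by simp)]
        show -f.coeff 0 * -((-1:ℤ)^n * f.coeff ((l:ℕ)+1)) = _
        rw [h0, add_zero]
        linear_combination f.coeff ((l:ℕ)+1) * neg_one_sq_pow n
      · have hjne : (j : ℕ) ≠ 0 := fun hc => hj0 (Fin.ext hc)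
        rw [if_neg (by omega), if_neg hj0]
        by_cases hjl : (j : ℕ) = (l : ℕ) + 1
        · rw [if_pos (by omega), if_pos hjl, ← hjl]
          ring
        · rw [if_neg (by omega), if_neg hjl, mul_zero, add_zero]
    rw [Finset.sum_congr rfl fun j _ => hsum j, Finset.sum_add_distrib,
      Finset.sum_ite_eq' Finset.univ (⟨0, hnpos⟩ : Fin n), if_pos (Finset.mem_univ _)]
    have hil : (i : ℕ) = n - 1 := by omega
    by_cases hl : (l : ℕ) + 1 < n
    · have : (∑ j : Fin n, if (j : ℕ) = (l : ℕ) + 1 then -f.coeff ((l:ℕ)+1) else 0)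
          = -f.coeff ((l:ℕ)+1) := by
        rw [Finset.sum_eq_single (⟨(l:ℕ)+1, hl⟩ : Fin n)]
        · rw [if_pos rfl]
        · intro j _ hj
          rw [if_neg (fun hc => hj (Fin.ext hc))]
        · intro hc
          exact absurd (Finset.mem_univ _) hc
      rw [this, Matrix.one_apply_ne (fun hc : i = l => by omega)]
      ring
    · have : (∑ j : Fin n, if (j : ℕ) = (l : ℕ) + 1 then -f.coeff ((l:ℕ)+1) else 0)
          = 0 := by
        apply Finset.sum_eq_zero
        intro j _
        rw [if_neg (by omega)]
      have hileq : i = l := Fin.ext (by omega)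
      have hleq : ((l : ℕ) + 1) = f.natDegree := by omega
      rw [this, add_zero, hleq, hm.coeff_natDegree, hileq, Matrix.one_apply_eq]
  · -- shift row
    rw [Finset.sum_eq_single (⟨(i:ℕ)+1, by omega⟩ : Fin n)]
    · rw [hCval]
      show (if (i : ℕ) + 1 = f.natDegree then -f.coeff _
        else if ((⟨(i:ℕ)+1, _⟩ : Fin n):ℕ) = (i:ℕ)+1 then 1 else 0) * _ = _
      simp only [Fin.val_mk]
      rw [if_neg hi]
      simp only [eq_self_iff_true, if_true, one_mul]
      rw [if_neg (by omega)]
      by_cases hil : i = l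
      · rw [if_pos (by omega), hil, Matrix.one_apply_eq]
      · rw [if_neg (fun hc => hil (Fin.ext (by omega))), Matrix.one_apply_ne hil]
    · intro j _ hj
      have hjv : (j : ℕ) ≠ (i : ℕ) + 1 := fun hc => hj (Fin.ext hc)
      show (if (i : ℕ) + 1 = f.natDegree then -f.coeff _
        else if (j:ℕ) = (i:ℕ)+1 then 1 else 0) * _ = 0
      rw [if_neg hi, if_neg hjv, zero_mul]
    · intro hc
      exact absurd (Finset.mem_univ _) hc

end comp

lemma transfer {N : Type*} [Fintype N] [DecidableEq N] (X Y : Matrix N N ℤ)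
    (h : X * Y = 1) (hu : IsUnit (1 - X).det) : IsUnit (1 - Y).det := by
  have h' : Y * X = 1 := mul_eq_one_comm.mp h
  have h2 : (1 : Matrix N N ℤ) - Y = Y * (X - 1) := by
    rw [Matrix.mul_sub, h', Matrix.mul_one]
  rw [h2, Matrix.det_mul]
  have hY : IsUnit Y.det :=
    IsUnit.of_mul_eq_one X.det (by rw [← Matrix.det_mul, h', Matrix.det_one])
  rw [show X - 1 = -(1 - X) from (neg_sub _ _).symm, Matrix.det_neg]
  exact hY.mul ((isUnit_one.neg.pow _).mul hu)

lemma isCS_forward (f : ℤ[X]) (hm : f.Monic) (h0 : f.coeff 0 = (-1)^f.natDegree)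
    (h : IsCSPoly f) : IsCSPoly (signedReciprocal f) := by
  have h0ne : f.coeff 0 ≠ 0 := by rw [h0]; exact pow_ne_zero _ (by norm_num)
  have hd := sr_natDegree f h0ne
  refine ⟨sr_monic f hm h0, sr_coeff_zero f hm h0, ?_⟩
  intro k hk1 hk2
  rw [hd] at hk2
  obtain ⟨-, -, hdet⟩ := h
  have hu : IsUnit (1 - compound k (companion f)).det := by
    rcases hdet k hk1 hk2 with h | h <;> rw [h]
    · exact isUnit_one
    · exact isUnit_one.neg
  rw [← det_one_sub_compound_submatrix (flipE f hd) (companion (signedReciprocal f))]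
  have hXY : compound k (companion f) *
      compound k ((companion (signedReciprocal f)).submatrix (flipE f hd) (flipE f hd)) = 1 := by
    rw [← compound_mul, companion_mul_inv f hm h0 hd, compound_one]
  exact Int.isUnit_iff.mp (transfer _ _ hXY hu)

end CSAux

theorem csPoly_iff_signedReciprocal (f : Polynomial ℤ) (n : ℕ)
    (hmonic : f.Monic) (hdeg : f.natDegree = n) (hdm : f.coeff 0 = (-1) ^ n) :
    IsCSPoly f ↔ IsCSPoly (signedReciprocal f) := by
  subst hdeg
  constructor
  · exact CSAux.isCS_forward f hmonic hdm
  · intro h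
    have h0' : (signedReciprocal f).coeff 0 = (-1)^(signedReciprocal f).natDegree :=
      CSAux.sr_coeff_zero f hmonic hdm
    have := CSAux.isCS_forward (signedReciprocal f)
      (CSAux.sr_monic f hmonic hdm) h0' h
    rwa [CSAux.sr_sr f hmonic hdm] at this
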